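/- Let G be a group, and let φ₀, φ₁ : K → K be injective group homomorphisms from a subgroup K ≤ G to itself such that the images φ₀(K) and φ₁(K) commute elementwise and φ₀(K) ∩ φ₁(K) = {1}. For a binary string w = i₁…i_ℓ write φ_w = φ_{i₁} ∘ ⋯ ∘ φ_{i_ℓ}. Let d ∈ K be an element of order k (2 < k ≤ ∞). Then for the family of binary strings W = { 1^j 0 i₁…i_j : 0 ≤ j ≤ p, i₁,…,i_j ∈ {0,1} } (of cardinality 2^{p+1} − 1), the elements a_w = φ_w(d), w ∈ W, each have order k, and the subgroup they generate is the internal direct sum of the cyclic subgroups ⟨a_w⟩; in particular ⟨a_w : w ∈ W⟩ ≅ (ℤ/k)^{2^{p+1}−1} (or ℤ^{2^{p+1}−1} if k = ∞). -/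

import Mathlib

/-- Composition `φ_{i₁} ∘ ⋯ ∘ φ_{i_ℓ}` of a pair of endomorphisms along a binary string. -/
def compWord {M : Type*} [Monoid M] (φ : Bool → (M →* M)) : List Bool → (M →* M)
  | [] => MonoidHom.id M
  | i :: w => (φ i).comp (compWord φ w)

/-- The family of binary strings `1^j 0 i₁…i_j`, `0 ≤ j ≤ p` (`true = 1`, `false = 0`). -/
def wordSet (p : ℕ) : Set (List Bool) :=
  {l | ∃ j ≤ p, ∃ w : List Bool, w.length = j ∧ l = List.replicate j true ++ false :: w}

section Aux

variable {G : Type*} [Group G] {K : Subgroup G} (φ : Bool → (K →* K))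

lemma compWord_cons (b : Bool) (w : List Bool) (x : K) :
    compWord φ (b :: w) x = φ b (compWord φ w x) := rfl

lemma compWord_injective (hinj : ∀ i, Function.Injective (φ i)) :
    ∀ w : List Bool, Function.Injective (compWord φ w)
  | [] => fun _ _ h => h
  | i :: w => (hinj i).comp (compWord_injective hinj w)

lemma compWord_commute (hcomm : ∀ x y : K, Commute (φ false x) (φ true y)) (x y : K) :
    ∀ (u u' : List Bool), ¬ u <+: u' → ¬ u' <+: u →
      Commute (compWord φ u x) (compWord φ u' y) := by
  intro u
  induction u with
  | nil => intro u' h _; exact absurd List.nil_prefix h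
  | cons a u ih =>
    intro u' h h'
    cases u' with
    | nil => exact absurd List.nil_prefix h'
    | cons b u' =>
      rw [compWord_cons, compWord_cons]
      have hu : ¬ u <+: u' ∨ a ≠ b := by
        by_cases hab : a = b
        · subst hab
          exact Or.inl fun hp => h (List.cons_prefix_cons.mpr ⟨rfl, hp⟩)
        · exact Or.inr hab
      cases a <;> cases b
      · refine Commute.map ?_ (φ false)
        exact ih u' (fun hp => h (List.cons_prefix_cons.mpr ⟨rfl, hp⟩))
          (fun hp => h' (List.cons_prefix_cons.mpr ⟨rfl, hp⟩))
      · exact hcomm _ _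
      · exact (hcomm _ _).symm
      · refine Commute.map ?_ (φ true)
        exact ih u' (fun hp => h (List.cons_prefix_cons.mpr ⟨rfl, hp⟩))
          (fun hp => h' (List.cons_prefix_cons.mpr ⟨rfl, hp⟩))

lemma closure_decomp (hcomm : ∀ x y : K, Commute (φ false x) (φ true y)) (d : K)
    (S : Set (List Bool)) (hS : [] ∉ S)
    {x : K} (hx : x ∈ Subgroup.closure ((fun u => compWord φ u d) '' S)) :
    ∃ x₀ ∈ Subgroup.closure ((fun u => compWord φ u d) '' {u | false :: u ∈ S}),
      ∃ x₁ ∈ Subgroup.closure ((fun u => compWord φ u d) '' {u | true :: u ∈ S}),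
        x = φ false x₀ * φ true x₁ := by
  induction hx using Subgroup.closure_induction with
  | mem y hy =>
    obtain ⟨u, hu, rfl⟩ := hy
    cases u with
    | nil => exact absurd hu hS
    | cons b u =>
      cases b
      · exact ⟨compWord φ u d, Subgroup.subset_closure ⟨u, hu, rfl⟩, 1, Subgroup.one_mem _, by
          show compWord φ (false :: u) d = _
          rw [compWord_cons, map_one, mul_one]⟩
      · exact ⟨1, Subgroup.one_mem _, compWord φ u d, Subgroup.subset_closure ⟨u, hu, rfl⟩, by
          show compWord φ (true :: u) d = _
          rw [compWord_cons, map_one, one_mul]⟩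
  | one => exact ⟨1, Subgroup.one_mem _, 1, Subgroup.one_mem _, by simp⟩
  | mul a b _ _ iha ihb =>
    obtain ⟨a₀, ha₀, a₁, ha₁, rfl⟩ := iha
    obtain ⟨b₀, hb₀, b₁, hb₁, rfl⟩ := ihb
    refine ⟨a₀ * b₀, mul_mem ha₀ hb₀, a₁ * b₁, mul_mem ha₁ hb₁, ?_⟩
    rw [map_mul, map_mul]
    have h := ((hcomm b₀ a₁).symm).eq
    rw [mul_assoc (φ false a₀), ← mul_assoc (φ true a₁), h,
      mul_assoc (φ false b₀), ← mul_assoc (φ false a₀)]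
  | inv a _ ih =>
    obtain ⟨a₀, h₀, a₁, h₁, rfl⟩ := ih
    refine ⟨a₀⁻¹, inv_mem h₀, a₁⁻¹, inv_mem h₁, ?_⟩
    rw [mul_inv_rev, map_inv, map_inv]
    exact ((hcomm a₀ a₁).inv_inv).symm.eq

lemma indep_aux (hinj : ∀ i, Function.Injective (φ i))
    (hcomm : ∀ x y : K, Commute (φ false x) (φ true y))
    (htriv : ∀ x y : K, φ false x = φ true y → φ false x = 1) (d : K) :
    ∀ (N : ℕ) (V : Set (List Bool)), (∀ u ∈ V, u.length ≤ N) →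
      (∀ u ∈ V, ∀ u' ∈ V, u ≠ u' → ¬ u <+: u') →
      ∀ v ∈ V, ∀ n : ℤ,
        (compWord φ v d) ^ n ∈ Subgroup.closure ((fun u => compWord φ u d) '' (V \ {v})) →
        (compWord φ v d) ^ n = 1 := by
  intro N
  induction N with
  | zero =>
    intro V hlen _ v hv n hmem
    have hV : V \ {v} = ∅ := by
      ext u
      simp only [Set.mem_diff, Set.mem_singleton_iff, Set.mem_empty_iff_false, iff_false,
        not_and, not_not]
      intro hu
      have h1 : u = [] := List.length_eq_zero_iff.mp (Nat.le_zero.mp (hlen u hu))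
      have h2 : v = [] := List.length_eq_zero_iff.mp (Nat.le_zero.mp (hlen v hv))
      rw [h1, h2]
    rw [hV] at hmem
    simpa using hmem
  | succ N ih =>
    intro V hlen hanti v hv n hmem
    cases v with
    | nil =>
      have hV : V \ {[]} = ∅ := by
        ext u
        simp only [Set.mem_diff, Set.mem_singleton_iff, Set.mem_empty_iff_false, iff_false,
          not_and, not_not]
        intro hu
        by_contra hne
        exact hanti [] hv u hu (fun h => hne h.symm) List.nil_prefix
      rw [hV] at hmem
      simpa using hmem
    | cons b v' =>
      have hSne : [] ∉ V \ {b :: v'} := by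
        rintro ⟨hu, hne⟩
        exact hanti [] hu (b :: v') hv (fun h => hne (h ▸ rfl)) List.nil_prefix
      rw [compWord_cons, ← map_zpow] at hmem
      obtain ⟨x₀, hx₀, x₁, hx₁, heq⟩ := closure_decomp φ hcomm d _ hSne hmem
      set A := (compWord φ v' d) ^ n with hA
      have hlen' : v'.length ≤ N := by
        have := hlen (b :: v') hv
        simpa using this
      cases b with
      | false =>
        have h1 : φ false (A * x₀⁻¹) = φ true x₁ := by
          rw [map_mul, map_inv, heq, (hcomm x₀ x₁).eq, mul_inv_cancel_right]
        have h2 : φ false (A * x₀⁻¹) = 1 := htriv _ _ h1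
        have h3 : A = x₀ := by
          have := hinj false (h2.trans (map_one (φ false)).symm)
          exact mul_inv_eq_one.mp this
        set S₀ : Set (List Bool) := {u | false :: u ∈ V \ {false :: v'}} with hS₀
        have hv'S₀ : v' ∉ S₀ := by
          intro hmem'
          exact hmem'.2 rfl
        have hdiff : insert v' S₀ \ {v'} = S₀ := Set.insert_diff_self_of_notMem hv'S₀
        have key : (compWord φ v' d) ^ n = 1 := by
          refine ih (insert v' S₀) ?_ ?_ v' (Set.mem_insert _ _) n ?_
          · rintro u (rfl | hu)
            · exact hlen'
            · have := hlen (false :: u) hu.1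
              simpa using this
          · intro u hu u' hu' hne hpre
            have hmemV : ∀ z, z ∈ insert v' S₀ → false :: z ∈ V := by
              rintro z (rfl | hz)
              · exact hv
              · exact hz.1
            exact hanti (false :: u) (hmemV u hu) (false :: u') (hmemV u' hu')
              (fun h => hne (List.cons_injective h))
              (List.cons_prefix_cons.mpr ⟨rfl, hpre⟩)
          · rw [hdiff, ← hA, h3]
            exact hx₀
        rw [compWord_cons, ← map_zpow, key, map_one]
      | true =>
        have h1 : φ false x₀ = φ true (A * x₁⁻¹) := by
          rw [map_mul, map_inv, heq, mul_inv_cancel_right]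
        have h2 : φ true (A * x₁⁻¹) = 1 := (htriv _ _ h1) ▸ h1.symm
        have h3 : A = x₁ := by
          have := hinj true (h2.trans (map_one (φ true)).symm)
          exact mul_inv_eq_one.mp this
        set S₁ : Set (List Bool) := {u | true :: u ∈ V \ {true :: v'}} with hS₁
        have hv'S₁ : v' ∉ S₁ := by
          intro hmem'
          exact hmem'.2 rfl
        have hdiff : insert v' S₁ \ {v'} = S₁ := Set.insert_diff_self_of_notMem hv'S₁
        have key : (compWord φ v' d) ^ n = 1 := by
          refine ih (insert v' S₁) ?_ ?_ v' (Set.mem_insert _ _) n ?_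
          · rintro u (rfl | hu)
            · exact hlen'
            · have := hlen (true :: u) hu.1
              simpa using this
          · intro u hu u' hu' hne hpre
            have hmemV : ∀ z, z ∈ insert v' S₁ → true :: z ∈ V := by
              rintro z (rfl | hz)
              · exact hv
              · exact hz.1
            exact hanti (true :: u) (hmemV u hu) (true :: u') (hmemV u' hu')
              (fun h => hne (List.cons_injective h))
              (List.cons_prefix_cons.mpr ⟨rfl, hpre⟩)
          · rw [hdiff, ← hA, h3]
            exact hx₁
        rw [compWord_cons, ← map_zpow, key, map_one]

end Aux

lemma wordSet_antichain (p : ℕ) :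
    ∀ u ∈ wordSet p, ∀ u' ∈ wordSet p, u ≠ u' → ¬ u <+: u' := by
  rintro u ⟨j, hj, w, hw, rfl⟩ u' ⟨j', hj', w', hw', rfl⟩ hne hpre
  have hlen := hpre.length_le
  simp only [List.length_append, List.length_replicate, List.length_cons, hw, hw'] at hlen
  rcases Nat.lt_or_ge j j' with hjj | hjj
  · -- prefix rep j true ++ [false] vs rep (j+1) true
    have hq₁ : (List.replicate j true ++ [false]) <+: List.replicate j' true ++ false :: w' := by
      refine List.IsPrefix.trans ?_ hpre
      refine ⟨w, ?_⟩
      simp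
    have hq₂ : (List.replicate (j + 1) true) <+: List.replicate j' true ++ false :: w' := by
      refine List.IsPrefix.trans ?_ (List.prefix_append _ _)
      refine ⟨List.replicate (j' - (j + 1)) true, ?_⟩
      rw [← List.replicate_add]
      congr 1
      omega
    have hql : (List.replicate j true ++ [false]).length = (List.replicate (j + 1) true).length := by
      simp
    have := (List.prefix_of_prefix_length_le hq₁ hq₂ hql.le).eq_of_length hql
    rw [List.replicate_succ'] at this
    have := List.append_cancel_left this
    simp at this
  · have hjj' : j = j' := by omega
    subst hjj'
    have hlens : (List.replicate j true ++ false :: w).length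
        = (List.replicate j true ++ false :: w').length := by
      simp [hw, hw']
    exact hne (hpre.eq_of_length hlens)

lemma sum_two_pow (n : ℕ) : ∑ j ∈ Finset.range n, 2 ^ j = 2 ^ n - 1 := by
  induction n with
  | zero => simp
  | succ n ih =>
    rw [Finset.sum_range_succ, ih, pow_succ]
    have : 1 ≤ 2 ^ n := Nat.one_le_two_pow
    omega

lemma wordSet_ncard (p : ℕ) : (wordSet p).ncard = 2 ^ (p + 1) - 1 := by
  classical
  set F : Finset (List Bool) := (Finset.range (p + 1)).biUnion
    (fun j => (Finset.univ : Finset (Fin j → Bool)).image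
      (fun v => List.replicate j true ++ false :: List.ofFn v)) with hF
  have hset : wordSet p = ↑F := by
    ext l
    simp only [wordSet, Set.mem_setOf_eq, hF, Finset.coe_biUnion, Finset.mem_coe,
      Finset.mem_range, Set.mem_iUnion, Finset.mem_image, Finset.mem_univ, true_and,
      exists_prop]
    constructor
    · rintro ⟨j, hj, w, hw, rfl⟩
      subst hw
      exact ⟨w.length, Nat.lt_succ_of_le hj, w.get, by rw [List.ofFn_get]⟩
    · rintro ⟨j, hj, v, rfl⟩
      exact ⟨j, Nat.lt_succ_iff.mp hj, List.ofFn v, List.length_ofFn, rfl⟩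
  rw [hset, Set.ncard_coe_finset]
  have hdisj : ∀ i ∈ Finset.range (p + 1), ∀ j ∈ Finset.range (p + 1), i ≠ j →
      Disjoint ((Finset.univ : Finset (Fin i → Bool)).image
        (fun v => List.replicate i true ++ false :: List.ofFn v))
        ((Finset.univ : Finset (Fin j → Bool)).image
        (fun v => List.replicate j true ++ false :: List.ofFn v)) := by
    intro i _ j _ hij
    rw [Finset.disjoint_left]
    rintro a ha hb
    simp only [Finset.mem_image, Finset.mem_univ, true_and] at ha hb
    obtain ⟨v, rfl⟩ := ha
    obtain ⟨v', hv'⟩ := hb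
    have := congrArg List.length hv'
    simp only [List.length_append, List.length_replicate, List.length_cons,
      List.length_ofFn] at this
    omega
  rw [hF, Finset.card_biUnion hdisj]
  have hcard : ∀ j, ((Finset.univ : Finset (Fin j → Bool)).image
      (fun v => List.replicate j true ++ false :: List.ofFn v)).card = 2 ^ j := by
    intro j
    rw [Finset.card_image_of_injective _ ?_, Finset.card_univ]
    · simp
    · intro v v' h
      apply List.ofFn_injective
      have := List.append_cancel_left h
      exact List.tail_eq_of_cons_eq this
  simp only [hcard]
  exact sum_two_pow (p + 1)

theorem branch_independent_cyclic_family {G : Type*} [Group G] (K : Subgroup G)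
    (φ : Bool → (K →* K)) (hinj : ∀ i, Function.Injective (φ i))
    (hcomm : ∀ x y : K, Commute (φ false x) (φ true y))
    (htriv : ∀ x y : K, φ false x = φ true y → φ false x = 1)
    (d : K) (hd : orderOf d = 0 ∨ 2 < orderOf d) (p : ℕ) :
    (wordSet p).ncard = 2 ^ (p + 1) - 1 ∧
    (∀ w ∈ wordSet p, orderOf (compWord φ w d) = orderOf d) ∧
    (∀ w ∈ wordSet p, ∀ w' ∈ wordSet p, Commute (compWord φ w d) (compWord φ w' d)) ∧
    (∀ w ∈ wordSet p,
      Subgroup.zpowers (compWord φ w d) ⊓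
        Subgroup.closure ((fun w' => compWord φ w' d) '' (wordSet p \ {w})) = ⊥) := by
  refine ⟨wordSet_ncard p, ?_, ?_, ?_⟩
  · intro w _
    exact orderOf_injective _ (compWord_injective φ hinj w) d
  · intro w hw w' hw'
    by_cases h : w = w'
    · subst h; exact Commute.refl _
    · exact compWord_commute φ hcomm d d w w' (wordSet_antichain p w hw w' hw' h)
        (wordSet_antichain p w' hw' w hw (Ne.symm h))
  · intro w hw
    rw [Subgroup.eq_bot_iff_forall]
    intro x hx
    rw [Subgroup.mem_inf] at hx
    obtain ⟨hx1, hx2⟩ := hx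
    obtain ⟨n, rfl⟩ := Subgroup.mem_zpowers_iff.mp hx1
    refine indep_aux φ hinj hcomm htriv d (2 * p + 1) (wordSet p) ?_
      (wordSet_antichain p) w hw n hx2
    rintro u ⟨j, hj, w', hw', rfl⟩
    simp only [List.length_append, List.length_replicate, List.length_cons, hw']
    omega
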